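/- Let k be a field of characteristic p > 0, G a finite p-group acting on a commutative k-algebra A by k-algebra automorphisms. Then the following are equivalent: (i) 1 = tr(a) for some a ∈ A; (ii) A^G = tr(A); (iii) A is free as a kG-module. -/

import Mathlib

open MonoidAlgebra Finset Submodule

section FP
variable {p : ℕ} [Fact p.Prime]

private lemma addHom_zmod_smul {M N : Type*} [AddCommMonoid M] [AddCommMonoid N]
    [Module (ZMod p) M] [Module (ZMod p) N] (f : M →+ N) (z : ZMod p) (x : M) :
    f (z • x) = z • f x := by
  haveI : NeZero p := ⟨(Fact.out : p.Prime).ne_zero⟩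
  obtain ⟨n, rfl⟩ := ZMod.natCast_rightInverse.surjective z
  rw [Nat.cast_smul_eq_nsmul, Nat.cast_smul_eq_nsmul, AddMonoidHom.map_nsmul]

private lemma exists_fixed_point {G : Type*} [Group G] [Fintype G] (hG : IsPGroup p G)
    {V : Type*} [AddCommGroup V] [Module (ZMod p) V]
    (φ : G →* AddMonoid.End V) {v₀ : V} (hv₀ : v₀ ≠ 0) :
    ∃ v : V, v ≠ 0 ∧ ∀ g : G, φ g v = v := by
  haveI : NeZero p := ⟨(Fact.out : p.Prime).ne_zero⟩
  set W : Submodule (ZMod p) V := span (ZMod p) (Set.range fun g : G => φ g v₀) with hWdef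
  have hstab : ∀ (g : G), ∀ w ∈ W, φ g w ∈ W := by
    intro g w hw
    induction hw using span_induction with
    | mem x h =>
      obtain ⟨g', rfl⟩ := h
      refine subset_span ⟨g * g', ?_⟩
      show φ (g * g') v₀ = φ g (φ g' v₀)
      rw [map_mul]; rfl
    | zero => simp only [map_zero]; exact zero_mem W
    | add x y _ _ hx hy => rw [map_add]; exact add_mem hx hy
    | smul z x _ hx => rw [show (φ g) (z • x) = z • (φ g) x from addHom_zmod_smul (φ g) z x]; exact W.smul_mem z hx
  have hv₀W : v₀ ∈ W := subset_span ⟨1, by show φ 1 v₀ = v₀; rw [map_one]; rfl⟩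
  letI : MulAction G W :=
    { smul := fun g w => ⟨φ g w, hstab g w w.2⟩
      one_smul := fun w => Subtype.ext (by show φ 1 w = w; rw [map_one]; rfl)
      mul_smul := fun g h w => Subtype.ext (by show φ (g * h) w = φ g (φ h w); rw [map_mul]; rfl) }
  haveI : Module.Finite (ZMod p) W := Module.Finite.span_of_finite _ (Set.finite_range _)
  haveI : Finite W := Module.finite_of_finite (ZMod p)
  have h0fix : (0 : W) ∈ MulAction.fixedPoints G W := by
    intro g; exact Subtype.ext (map_zero (φ g))
  have hvne : (⟨v₀, hv₀W⟩ : W) ≠ 0 := by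
    simp only [ne_eq, Submodule.mk_eq_zero]; exact hv₀
  have hpdvd : p ∣ Nat.card W := by
    have hord : addOrderOf (⟨v₀, hv₀W⟩ : W) = p := by
      refine addOrderOf_eq_prime ?_ hvne
      have : (p : ℕ) • (⟨v₀, hv₀W⟩ : W) = ((p : ZMod p)) • (⟨v₀, hv₀W⟩ : W) :=
        (Nat.cast_smul_eq_nsmul (ZMod p) p _).symm
      rw [this, ZMod.natCast_self, zero_smul]
    have := addOrderOf_dvd_natCard (⟨v₀, hv₀W⟩ : W)
    rwa [hord] at this
  obtain ⟨b, hbfix, hb0⟩ := hG.exists_fixed_point_of_prime_dvd_card_of_fixed_point (α := W) hpdvd h0fix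
  refine ⟨(b : V), ?_, ?_⟩
  · intro h
    exact hb0 (Subtype.ext h.symm)
  · intro g
    have := hbfix g
    exact congrArg Subtype.val this

end FP
section Aug
variable (k : Type*) [Field k] (G : Type*) [Group G]

/-- The augmentation ideal of `MonoidAlgebra k G` as a `k`-subspace. -/
private noncomputable def augJ : Submodule k (MonoidAlgebra k G) :=
  span k (Set.range fun g : G => of k G g - 1)

/-- The augmentation character. -/
private noncomputable def augE : MonoidAlgebra k G →ₐ[k] k := MonoidAlgebra.lift k k G 1

variable {k G}

private lemma augE_single (g : G) (c : k) : augE k G (MonoidAlgebra.single g c) = c := by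
  simp [augE, MonoidAlgebra.lift_single]

private lemma mem_augJ_of (g : G) : of k G g - 1 ∈ augJ k G := subset_span ⟨g, rfl⟩

/-- A subspace stable under left multiplication by group elements. -/
private def Gst (S : Submodule k (MonoidAlgebra k G)) : Prop :=
  ∀ (g : G), ∀ x ∈ S, of k G g * x ∈ S

private lemma gst_augJ : Gst (augJ k G) := by
  intro g x hx
  induction hx using span_induction with
  | mem y hy =>
    obtain ⟨h, rfl⟩ := hy
    have : of k G g * (of k G h - 1) = (of k G (g * h) - 1) - (of k G g - 1) := by
      rw [mul_sub, mul_one, ← map_mul]; abel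
    rw [this]
    exact sub_mem (mem_augJ_of _) (mem_augJ_of _)
  | zero => rw [mul_zero]; exact zero_mem _
  | add y z _ _ hy hz => rw [mul_add]; exact add_mem hy hz
  | smul c y _ hy => rw [mul_smul_comm]; exact Submodule.smul_mem _ c hy

private lemma gst_mul {S : Submodule k (MonoidAlgebra k G)} (hS : Gst S) :
    Gst (augJ k G * S) := by
  intro g x hx
  refine Submodule.mul_induction_on hx (fun j hj s hs => ?_) (fun y z hy hz => ?_)
  · rw [← mul_assoc]
    exact Submodule.mul_mem_mul (gst_augJ g j hj) hs
  · rw [mul_add]; exact add_mem hy hz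

private lemma augJ_mul_le {S : Submodule k (MonoidAlgebra k G)} (hS : Gst S) :
    augJ k G * S ≤ S := by
  rw [Submodule.mul_le]
  intro j hj s hs
  induction hj using span_induction with
  | mem y hy =>
    obtain ⟨g, rfl⟩ := hy
    rw [sub_mul, one_mul]
    exact sub_mem (hS g s hs) hs
  | zero => rw [zero_mul]; exact zero_mem _
  | add y z _ _ hy hz => rw [add_mul]; exact add_mem hy hz
  | smul c y _ hy => rw [smul_mul_assoc]; exact Submodule.smul_mem _ c hy

private lemma sub_augE_mem (r : MonoidAlgebra k G) :
    r - algebraMap k (MonoidAlgebra k G) (augE k G r) ∈ augJ k G := by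
  induction r using MonoidAlgebra.induction_on with
  | of g =>
    have : augE k G (of k G g) = 1 := by
      rw [MonoidAlgebra.of_apply, augE_single]
    rw [this, map_one]
    exact mem_augJ_of g
  | add f g hf hg =>
    have : f + g - algebraMap k (MonoidAlgebra k G) (augE k G (f + g)) =
        (f - algebraMap k (MonoidAlgebra k G) (augE k G f)) +
        (g - algebraMap k (MonoidAlgebra k G) (augE k G g)) := by
      rw [map_add, map_add]; abel
    rw [this]; exact add_mem hf hg
  | smul c f hf =>
    have : c • f - algebraMap k (MonoidAlgebra k G) (augE k G (c • f)) =
        c • (f - algebraMap k (MonoidAlgebra k G) (augE k G f)) := by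
      rw [map_smul, smul_sub]
      congr 1
      rw [smul_eq_mul, map_mul, ← Algebra.smul_def]
    rw [this]
    exact Submodule.smul_mem _ c hf

end Aug
section Nilp
variable {p : ℕ} [Fact p.Prime] {k : Type*} [Field k] [CharP k p]
  {G : Type*} [Group G] [Fintype G]

set_option synthInstance.maxHeartbeats 1000000 in
private lemma augJ_mul_ne {S : Submodule k (MonoidAlgebra k G)} (hG : IsPGroup p G)
    (hS : Gst S) (hne : S ≠ ⊥) : augJ k G * S ≠ S := by
  intro hEq
  obtain ⟨s₀, hs₀S, hs₀⟩ := (Submodule.ne_bot_iff S).mp hne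
  have hns : (⟨s₀, hs₀S⟩ : S) ≠ 0 := by simp only [ne_eq, Submodule.mk_eq_zero]; exact hs₀
  have hex : ¬ (∀ φ : Module.Dual k S, φ ⟨s₀, hs₀S⟩ = 0) := by
    rw [Module.forall_dual_apply_eq_zero_iff]
    exact hns
  push_neg at hex
  obtain ⟨f₀, hf₀⟩ := hex
  letI : Module (ZMod p) (Module.Dual k S) := AddCommGroup.zmodModule (by
    intro x
    rw [← Nat.cast_smul_eq_nsmul k p x, CharP.cast_eq_zero k, zero_smul])
  let mulBy : G → (S →ₗ[k] S) := fun g =>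
    { toFun := fun s => ⟨of k G g * (s : MonoidAlgebra k G), hS g _ s.2⟩
      map_add' := by intro s t; ext; simp [mul_add]
      map_smul' := by intro c s; ext; simp [mul_smul_comm] }
  let Φ : G →* AddMonoid.End (Module.Dual k S) :=
    { toFun := fun g => AddMonoidHom.mk' (fun f => f ∘ₗ mulBy g⁻¹)
        (fun f₁ f₂ => by ext s; simp)
      map_one' := by
        refine AddMonoidHom.ext fun f => ?_
        refine LinearMap.ext fun s => ?_
        show f (mulBy 1⁻¹ s) = f s
        congr 1
        ext
        simp [mulBy]
      map_mul' := by
        intro g h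
        refine AddMonoidHom.ext fun f => ?_
        refine LinearMap.ext fun s => ?_
        show f (mulBy (g * h)⁻¹ s) = f (mulBy h⁻¹ (mulBy g⁻¹ s))
        congr 1
        ext
        simp [mulBy, mul_inv_rev, map_mul, mul_assoc] }
  have hf₀ne : f₀ ≠ 0 := fun h => hf₀ (by rw [h]; rfl)
  obtain ⟨f, hfne, hffix⟩ := exists_fixed_point hG Φ hf₀ne
  have hfix' : ∀ (g : G) (s : S), f (mulBy g s) = f s := by
    intro g s
    have h1 : Φ g⁻¹ f = f := hffix g⁻¹
    have h2 : f (mulBy g⁻¹⁻¹ s) = f s := LinearMap.congr_fun h1 s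
    rwa [inv_inv] at h2
  obtain ⟨F, hF⟩ := LinearMap.exists_extend f
  have hFs : ∀ (s : MonoidAlgebra k G) (hs : s ∈ S), F s = f ⟨s, hs⟩ := fun s hs =>
    LinearMap.congr_fun hF ⟨s, hs⟩
  have hFfix : ∀ (g : G) (s : MonoidAlgebra k G) (hs : s ∈ S), F (of k G g * s) = F s := by
    intro g s hs
    rw [hFs _ (hS g s hs), hFs s hs]
    exact hfix' g ⟨s, hs⟩
  have hF0 : ∀ s ∈ S, F s = 0 := by
    intro s hs
    rw [← hEq] at hs
    refine Submodule.mul_induction_on hs ?_ ?_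
    · intro j hj t ht
      induction hj using span_induction with
      | mem y hy =>
        obtain ⟨g, rfl⟩ := hy
        rw [sub_mul, one_mul, map_sub, hFfix g t ht, sub_self]
      | zero => rw [zero_mul, map_zero]
      | add y z _ _ hy hz => rw [add_mul, map_add, hy, hz, add_zero]
      | smul c y _ hy => rw [smul_mul_assoc, map_smul, hy, smul_zero]
    · intro x y hx hy; rw [map_add, hx, hy, add_zero]
  refine hfne ?_
  ext s
  rw [← hFs s s.2]
  · exact hF0 s s.2
private lemma gst_augJ_pow : ∀ n : ℕ, Gst ((augJ k G)^(n+1) : Submodule k (MonoidAlgebra k G))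
  | 0 => by rw [pow_one]; exact gst_augJ
  | n+1 => by
    rw [pow_succ']
    exact gst_mul (gst_augJ_pow n)

private lemma augJ_nilpotent (hG : IsPGroup p G) : ∃ m : ℕ, (augJ k G)^m = ⊥ := by
  haveI : Module.Finite k (MonoidAlgebra k G) :=
    Module.Finite.equiv ((Finsupp.linearEquivFunOnFinite k k G).symm.trans (MonoidAlgebra.coeffLinearEquiv k).symm)
  by_contra h
  push_neg at h
  have step : ∀ n : ℕ, (augJ k G)^(n+2) < (augJ k G)^(n+1) := by
    intro n
    have hle : (augJ k G)^(n+2) ≤ (augJ k G)^(n+1) := by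
      have := augJ_mul_le (gst_augJ_pow (k := k) (G := G) n)
      rwa [← pow_succ'] at this
    refine lt_of_le_of_ne hle ?_
    intro hEq
    refine augJ_mul_ne hG (gst_augJ_pow n) (h (n+1)) ?_
    rw [← pow_succ']
    exact hEq
  have mono : ∀ n : ℕ, Module.finrank k ((augJ k G)^(n+1) : Submodule k (MonoidAlgebra k G)) + n
      ≤ Module.finrank k ((augJ k G)^1 : Submodule k (MonoidAlgebra k G)) := by
    intro n
    induction n with
    | zero => simp
    | succ n ih =>
      have hlt := Submodule.finrank_lt_finrank_of_lt (step n)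
      show Module.finrank k ((augJ k G)^(n+2) : Submodule k (MonoidAlgebra k G)) + (n+1)
        ≤ Module.finrank k ((augJ k G)^1 : Submodule k (MonoidAlgebra k G))
      omega
  have := mono (Module.finrank k ((augJ k G)^1 : Submodule k (MonoidAlgebra k G)) + 1)
  omega

end Nilp
section Nak
variable {p : ℕ} [Fact p.Prime] {k : Type*} [Field k] [CharP k p]
  {G : Type*} [Group G] [Fintype G]
  {M : Type*} [AddCommGroup M] [Module k M] [Module (MonoidAlgebra k G) M]
  [IsScalarTower k (MonoidAlgebra k G) M]

variable (k G M) in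
/-- `J • P` as a span. -/
private def jsp (P : Submodule k M) : Submodule k M :=
  span k {y | ∃ j ∈ augJ k G, ∃ x ∈ P, y = j • x}

variable (k G M) in
private def vsp (n : ℕ) : Submodule k M :=
  span k {y | ∃ j ∈ ((augJ k G)^n : Submodule k (MonoidAlgebra k G)), ∃ x : M, y = j • x}

private lemma jsp_mono {P Q : Submodule k M} (h : P ≤ Q) : jsp k G M P ≤ jsp k G M Q := by
  refine span_mono ?_
  rintro y ⟨j, hj, x, hx, rfl⟩
  exact ⟨j, hj, x, h hx, rfl⟩

private lemma jsp_sup_le (P Q : Submodule k M) :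
    jsp k G M (P ⊔ Q) ≤ jsp k G M P ⊔ jsp k G M Q := by
  rw [jsp, span_le]
  rintro y ⟨j, hj, x, hx, rfl⟩
  obtain ⟨xp, hxp, xq, hxq, rfl⟩ := Submodule.mem_sup.mp hx
  rw [smul_add]
  exact Submodule.add_mem_sup (subset_span ⟨j, hj, xp, hxp, rfl⟩)
    (subset_span ⟨j, hj, xq, hxq, rfl⟩)

private lemma jsp_restrict (N : Submodule (MonoidAlgebra k G) M) :
    jsp k G M (N.restrictScalars k) ≤ N.restrictScalars k := by
  rw [jsp, span_le]
  rintro y ⟨j, _, x, hx, rfl⟩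
  exact N.smul_mem j hx

private lemma vsp_zero : vsp k G M 0 = ⊤ := by
  rw [eq_top_iff]
  intro x _
  refine subset_span ⟨1, ?_, x, (one_smul _ x).symm⟩
  rw [pow_zero, Submodule.one_eq_span]
  exact subset_span rfl

private lemma jsp_vsp (n : ℕ) : jsp k G M (vsp k G M n) ≤ vsp k G M (n + 1) := by
  rw [jsp, span_le]
  rintro y ⟨j, hj, x, hx, rfl⟩
  induction hx using span_induction with
  | mem u hu =>
    obtain ⟨j', hj', z, rfl⟩ := hu
    rw [smul_smul]
    exact subset_span ⟨j * j', by rw [pow_succ']; exact Submodule.mul_mem_mul hj hj', z, rfl⟩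
  | zero => rw [smul_zero]; exact zero_mem _
  | add u v _ _ hu hv => rw [smul_add]; exact add_mem hu hv
  | smul c u _ hu => rw [smul_comm]; exact Submodule.smul_mem _ c hu

private lemma jsp_iter_le_vsp (n : ℕ) (P : Submodule k M) :
    (jsp k G M)^[n] P ≤ vsp k G M n := by
  induction n generalizing P with
  | zero => rw [Function.iterate_zero_apply, vsp_zero]; exact le_top
  | succ n ih =>
    rw [Function.iterate_succ_apply']
    exact le_trans (jsp_mono (ih P) |>.trans (jsp_vsp n)) le_rfl

private lemma nak (hG : IsPGroup p G) (N : Submodule (MonoidAlgebra k G) M)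
    (P : Submodule k M) (h : P ≤ N.restrictScalars k ⊔ jsp k G M P) :
    P ≤ N.restrictScalars k := by
  obtain ⟨m, hm⟩ := augJ_nilpotent (k := k) (G := G) hG
  have hVm : vsp k G M m = ⊥ := by
    rw [vsp, eq_bot_iff, span_le]
    rintro y ⟨j, hj, x, rfl⟩
    rw [hm] at hj
    obtain rfl : j = 0 := by simpa using hj
    rw [zero_smul]
    exact zero_mem _
  have hC : ∀ n : ℕ, (jsp k G M)^[n] P ≤ N.restrictScalars k ⊔ (jsp k G M)^[n+1] P := by
    intro n
    induction n with
    | zero => simpa using h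
    | succ n ih =>
      rw [Function.iterate_succ_apply' (jsp k G M) n P]
      calc jsp k G M ((jsp k G M)^[n] P)
          ≤ jsp k G M (N.restrictScalars k ⊔ (jsp k G M)^[n+1] P) := jsp_mono ih
        _ ≤ jsp k G M (N.restrictScalars k) ⊔ jsp k G M ((jsp k G M)^[n+1] P) := jsp_sup_le _ _
        _ ≤ N.restrictScalars k ⊔ (jsp k G M)^[n+1+1] P := by
            refine sup_le_sup (jsp_restrict N) ?_
            rw [Function.iterate_succ_apply' (jsp k G M) (n+1) P]
  have hchain : ∀ n : ℕ, P ≤ N.restrictScalars k ⊔ (jsp k G M)^[n] P := by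
    intro n
    induction n with
    | zero => rw [Function.iterate_zero_apply]; exact le_sup_right
    | succ n ih =>
      refine ih.trans ?_
      refine sup_le le_sup_left ?_
      exact (hC n).trans le_rfl
  have := (hchain m).trans (sup_le_sup le_rfl ((jsp_iter_le_vsp m P).trans hVm.le))
  simpa using this

end Nak
section Bridge
variable {k : Type*} [Field k] {G : Type*} [Group G]
  {A : Type*} [CommRing A] [Algebra k A] [MulSemiringAction G A] [SMulCommClass G k A]

private lemma asmod_algebraMap_smul (c : k)
    (x : (Representation.ofDistribMulAction k G A).asModule) :
    (algebraMap k (MonoidAlgebra k G) c) • x = c • x := by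
  show ((Representation.ofDistribMulAction k G A).asAlgebraHom
    (algebraMap k (MonoidAlgebra k G) c)) x = c • x
  rw [AlgHom.commutes]
  rfl

private instance asmod_tower :
    IsScalarTower k (MonoidAlgebra k G) (Representation.ofDistribMulAction k G A).asModule :=
  IsScalarTower.of_algebraMap_smul asmod_algebraMap_smul

private instance asmod_smulcomm :
    SMulCommClass k (MonoidAlgebra k G) (Representation.ofDistribMulAction k G A).asModule := by
  constructor
  intro c r x
  rw [← asmod_algebraMap_smul c x, ← mul_smul, ← asmod_algebraMap_smul c (r • x), ← mul_smul,
    Algebra.commutes]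

/-- The identity, as a `k`-linear equivalence between the module and the algebra. -/
private def eL : (Representation.ofDistribMulAction k G A).asModule ≃ₗ[k] A :=
  { (Representation.ofDistribMulAction k G A).asModuleEquiv with
    map_smul' := fun _ _ => rfl }

private lemma eL_of (g : G) (x : (Representation.ofDistribMulAction k G A).asModule) :
    eL (of k G g • x) = g • eL (A := A) x := by
  show (Representation.ofDistribMulAction k G A).asModuleEquiv (of k G g • x) = _
  rw [Representation.asModuleEquiv_map_smul, Representation.asAlgebraHom_of]
  rfl

end Bridge

section RLin
variable {k : Type*} [Field k] {G : Type*} [Group G]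

private lemma rlinear_of_equivariant {M N : Type*} [AddCommGroup M] [AddCommGroup N]
    [Module k M] [Module k N] [Module (MonoidAlgebra k G) M] [Module (MonoidAlgebra k G) N]
    [IsScalarTower k (MonoidAlgebra k G) M] [IsScalarTower k (MonoidAlgebra k G) N]
    (f : M →ₗ[k] N) (h : ∀ (g : G) (x : M), f (of k G g • x) = of k G g • f x)
    (r : MonoidAlgebra k G) (x : M) : f (r • x) = r • f x := by
  induction r using MonoidAlgebra.induction_on with
  | of g => exact h g x
  | add r s hr hs => rw [add_smul, map_add, hr, hs, add_smul]
  | smul c r hr => rw [smul_assoc, map_smul, hr, smul_assoc]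

private lemma left_invariant {u : MonoidAlgebra k G} (hu : ∀ g : G, of k G g * u = u)
    [Fintype G] :
    u = (∑ g : G, of k G g) * MonoidAlgebra.single (1 : G) (u.coeff 1) := by
  ext h
  have h1 : u.coeff h = u.coeff 1 := by
    have h2 := congrArg (fun v : MonoidAlgebra k G => v.coeff h) (hu h)
    simp only [MonoidAlgebra.of_apply] at h2
    rw [MonoidAlgebra.coeff_single_mul_apply, inv_mul_cancel, one_mul] at h2
    exact h2.symm
  have h3 : ∀ g : G, of k G g * MonoidAlgebra.single (1 : G) (u.coeff 1)
      = MonoidAlgebra.single g (u.coeff 1) := by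
    intro g
    rw [MonoidAlgebra.of_apply, MonoidAlgebra.single_mul_single, mul_one, one_mul]
  rw [h1, Finset.sum_mul, Finset.sum_congr rfl fun g _ => h3 g]
  rw [MonoidAlgebra.coeff_sum, Finsupp.finset_sum_apply]
  simp [MonoidAlgebra.single_apply]

end RLin
set_option maxHeartbeats 2000000 in
/-- For a commutative `k`-algebra `A` (`char k = p`) with an action of a finite
`p`-group `G` by `k`-algebra automorphisms, the following are equivalent:
(i) `1 = tr a` for some `a ∈ A`; (ii) `A^G = tr(A)`; (iii) `A` is free as a `kG`-module
(phrased via the associated `MonoidAlgebra k G`-module structure). -/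
theorem trace_one_tfae
    {p : ℕ} [Fact p.Prime] (k : Type*) [Field k] [CharP k p]
    (G : Type*) [Group G] [Fintype G] (hG : IsPGroup p G)
    (A : Type*) [CommRing A] [Algebra k A] [MulSemiringAction G A] [SMulCommClass G k A] :
    List.TFAE
      [ (∃ a : A, (∑ g : G, g • a) = 1),
        (∀ b : A, (∀ g : G, g • b = b) → ∃ a : A, (∑ g : G, g • a) = b),
        Module.Free (MonoidAlgebra k G)
          (Representation.ofDistribMulAction k G A).asModule ] := by
  tfae_have 1 → 2 := by
    rintro ⟨a, ha⟩ b hb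
    refine ⟨b * a, ?_⟩
    calc (∑ g : G, g • (b * a)) = ∑ g : G, (g • b) * (g • a) := by
          simp only [smul_mul']
      _ = ∑ g : G, b * (g • a) := by simp only [hb]
      _ = b * ∑ g : G, g • a := by rw [Finset.mul_sum]
      _ = b := by rw [ha, mul_one]
  tfae_have 2 → 1 := by
    intro h2
    exact h2 1 (fun g => smul_one g)
  tfae_have 3 → 1 := by
    intro hfree
    set ρ := Representation.ofDistribMulAction k G A with hρ
    haveI := hfree
    let b := Module.Free.chooseBasis (MonoidAlgebra k G) ρ.asModule
    set x : ρ.asModule := eL.symm (1 : A) with hx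
    have hinv : ∀ g : G, (of k G g) • x = x := by
      intro g
      apply (eL (k := k) (G := G) (A := A)).injective
      rw [eL_of, hx, LinearEquiv.apply_symm_apply, smul_one]
    have hco : ∀ (g : G) i, of k G g * (b.repr x i) = b.repr x i := by
      intro g i
      have h1 : b.repr (of k G g • x) = of k G g • b.repr x := map_smul _ _ _
      rw [hinv g] at h1
      have := congrArg (fun v => v i) h1
      simpa [Finsupp.smul_apply, smul_eq_mul] using this.symm
    -- rewrite x as N • m
    set N : MonoidAlgebra k G := ∑ g : G, of k G g with hN
    set m : ρ.asModule :=
      (b.repr x).sum (fun i r => (MonoidAlgebra.single (1 : G) (r.coeff 1)) • b i) with hm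
    have hxm : x = N • m := by
      conv_lhs => rw [← b.linearCombination_repr x]
      rw [Finsupp.linearCombination_apply, hm, Finsupp.smul_sum]
      refine Finsupp.sum_congr ?_
      intro i hi
      rw [smul_smul, ← left_invariant (fun g => hco g i)]
    refine ⟨eL m, ?_⟩
    have : eL (N • m) = ∑ g : G, g • eL (A := A) m := by
      rw [hN, Finset.sum_smul, map_sum]
      exact Finset.sum_congr rfl fun g _ => eL_of g m
    rw [← this, ← hxm, hx, LinearEquiv.apply_symm_apply]
  tfae_have 1 → 3 := by
    rintro ⟨a, ha⟩
    set ρ := Representation.ofDistribMulAction k G A with hρ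
    -- the evaluation map π : kG ⊗ A → M
    let B : MonoidAlgebra k G →ₗ[MonoidAlgebra k G] (A →ₗ[k] ρ.asModule) :=
      { toFun := fun r => r • ((eL (k := k) (G := G) (A := A)).symm.toLinearMap)
        map_add' := fun r s => add_smul r s _
        map_smul' := fun r s => mul_smul r s _ }
    let π : TensorProduct k (MonoidAlgebra k G) A →ₗ[MonoidAlgebra k G] ρ.asModule :=
      TensorProduct.AlgebraTensorModule.lift B
    have hπ : ∀ (r : MonoidAlgebra k G) (y : A), π (r ⊗ₜ[k] y) = r • eL.symm y :=
      fun r y => rfl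
    -- the splitting σ
    let σ₀ : A →ₗ[k] TensorProduct k (MonoidAlgebra k G) A :=
      ∑ g : G, (TensorProduct.mk k (MonoidAlgebra k G) A (of k G g)).comp
        ((LinearMap.mulRight k a).comp (DistribMulAction.toLinearMap k A (g⁻¹ : G)))
    have hσ₀ : ∀ y : A, σ₀ y = ∑ g : G, (of k G g) ⊗ₜ[k] ((g⁻¹ • y) * a) := by
      intro y
      rw [LinearMap.sum_apply]
      rfl
    have hequiA : ∀ (g : G) (y : A), σ₀ (g • y) = of k G g • σ₀ y := by
      intro g y
      rw [hσ₀, hσ₀, Finset.smul_sum]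
      refine Fintype.sum_equiv (Equiv.mulLeft g⁻¹) _ _ ?_
      intro x
      show (of k G x) ⊗ₜ[k] ((x⁻¹ • g • y) * a) =
        of k G g • ((of k G (g⁻¹ * x)) ⊗ₜ[k] (((g⁻¹ * x)⁻¹ • y) * a))
      rw [TensorProduct.smul_tmul', smul_eq_mul, ← map_mul, mul_inv_cancel_left,
        mul_inv_rev, inv_inv, mul_smul]
    have hequi : ∀ (g : G) (x : ρ.asModule),
        (σ₀.comp (eL (k := k) (G := G) (A := A)).toLinearMap) (of k G g • x)
          = of k G g • (σ₀.comp eL.toLinearMap) x := by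
      intro g x
      simp only [LinearMap.comp_apply, LinearEquiv.coe_coe]
      rw [eL_of, hequiA]
    let σ : ρ.asModule →ₗ[MonoidAlgebra k G] TensorProduct k (MonoidAlgebra k G) A :=
      { toFun := fun x => σ₀ (eL x)
        map_add' := fun x y => by
          show σ₀ (eL (x + y)) = σ₀ (eL x) + σ₀ (eL y)
          rw [map_add, map_add]
        map_smul' := fun r x => rlinear_of_equivariant (σ₀.comp eL.toLinearMap) hequi r x }
    have hsplit : π.comp σ = LinearMap.id := by
      ext x
      show π (σ₀ (eL x)) = x
      apply (eL (k := k) (G := G) (A := A)).injective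
      rw [hσ₀, map_sum, map_sum]
      have hterm : ∀ g : G, eL (π ((of k G g) ⊗ₜ[k] ((g⁻¹ • eL x) * a)))
          = (eL x) * (g • a) := by
        intro g
        rw [hπ, eL_of, LinearEquiv.apply_symm_apply, smul_mul', smul_inv_smul]
      rw [Finset.sum_congr rfl fun g _ => hterm g, ← Finset.mul_sum, ha, mul_one]
    haveI : Module.Projective (MonoidAlgebra k G) ρ.asModule :=
      Module.Projective.of_split σ π hsplit
    -- choosing a complement to J•M and a basis of it
    set W := jsp k G ρ.asModule ⊤ with hW
    obtain ⟨C, hC⟩ := Submodule.exists_isCompl W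
    let bC := Module.Basis.ofVectorSpace k C
    let cf : Module.Basis.ofVectorSpaceIndex k C → ρ.asModule := fun i => (bC i : ρ.asModule)
    let Φ := Finsupp.linearCombination (MonoidAlgebra k G) cf
    have hCspan : span k (Set.range cf) = C := by
      have h1 : Set.range cf = C.subtype '' Set.range bC := by
        rw [← Set.range_comp]; rfl
      rw [h1, ← Submodule.map_span, bC.span_eq, Submodule.map_top, Submodule.range_subtype]
    -- surjectivity of Φ
    have hNtop : span (MonoidAlgebra k G) (Set.range cf) = ⊤ := by
      have hyp : (⊤ : Submodule k ρ.asModule) ≤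
          (span (MonoidAlgebra k G) (Set.range cf)).restrictScalars k
            ⊔ jsp k G ρ.asModule ⊤ := by
        intro x _
        have hx : x ∈ W ⊔ C := by rw [hC.sup_eq_top]; trivial
        obtain ⟨w, hw, c, hc, rfl⟩ := Submodule.mem_sup.mp hx
        refine Submodule.add_mem _ (Submodule.mem_sup_right hw) (Submodule.mem_sup_left ?_)
        have h2 : c ∈ span k (Set.range cf) := by rw [hCspan]; exact hc
        exact Submodule.span_le_restrictScalars k _ _ h2
      have h3 := nak hG _ ⊤ hyp
      rw [eq_top_iff]
      intro x _
      exact h3 trivial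
    have hsurj : Function.Surjective Φ := by
      rw [← LinearMap.range_eq_top, Finsupp.range_linearCombination]
      exact hNtop
    obtain ⟨h, hh⟩ := Module.projective_lifting_property Φ LinearMap.id hsurj
    -- injectivity of Φ
    set K := LinearMap.ker Φ with hKdef
    have hKle : K.restrictScalars k ≤
        ((⊥ : Submodule (MonoidAlgebra k G)
            (Module.Basis.ofVectorSpaceIndex k C →₀ MonoidAlgebra k G)).restrictScalars k)
          ⊔ jsp k G _ (K.restrictScalars k) := by
      intro y hy
      have hΦy : Φ y = 0 := hy
      have hcoef : ∀ i, augE k G (y i) = 0 := by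
        let prC := C.linearProjOfIsCompl W hC.symm
        have hW0 : ∀ w ∈ W, prC w = 0 := fun w hw =>
          Submodule.linearProjOfIsCompl_apply_right hC.symm ⟨w, hw⟩
        have hterm : ∀ i (r : MonoidAlgebra k G), prC (r • cf i) = (augE k G r) • bC i := by
          intro i r
          have hdec : r • cf i = (algebraMap k (MonoidAlgebra k G) (augE k G r)) • cf i
              + (r - algebraMap k (MonoidAlgebra k G) (augE k G r)) • cf i := by
            rw [← add_smul, add_sub_cancel]
          have hmemW : (r - algebraMap k (MonoidAlgebra k G) (augE k G r)) • cf i ∈ W := by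
            exact subset_span ⟨_, sub_augE_mem r, cf i, trivial, rfl⟩
          rw [hdec, map_add, hW0 _ hmemW, add_zero, algebraMap_smul, map_smul]
          congr 1
          exact Submodule.linearProjOfIsCompl_apply_left hC.symm (bC i)
        have h0 : (Finsupp.linearCombination k bC)
            (y.mapRange (augE k G) (map_zero _)) = 0 := by
          have h1 : prC (Φ y) = 0 := by rw [hΦy, map_zero]
          rw [Finsupp.linearCombination_apply, map_finsuppSum] at h1
          rw [Finsupp.linearCombination_apply,
            Finsupp.sum_mapRange_index (fun i => by rw [zero_smul])]
          calc (y.sum fun i r => (augE k G r) • bC i)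
              = y.sum fun i r => prC (r • cf i) := by
                refine Finsupp.sum_congr fun i _ => (hterm i (y i)).symm
            _ = 0 := h1
        have h2 := linearIndependent_iff.mp bC.linearIndependent _ h0
        intro i
        have h3 := DFunLike.congr_fun h2 i
        rwa [Finsupp.mapRange_apply] at h3
      let P' := (LinearMap.id : (Module.Basis.ofVectorSpaceIndex k C →₀ MonoidAlgebra k G)
          →ₗ[MonoidAlgebra k G] _) - h.comp Φ
      have hP'K : ∀ z, P' z ∈ K := by
        intro z
        show Φ _ = 0
        have h4 := LinearMap.congr_fun hh (Φ z)
        simp only [P', LinearMap.sub_apply, LinearMap.id_apply, LinearMap.comp_apply, map_sub]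
        rw [LinearMap.comp_apply, LinearMap.id_apply] at h4
        rw [h4, sub_self]
      have hyP : P' y = y := by
        simp only [P', LinearMap.sub_apply, LinearMap.id_apply, LinearMap.comp_apply, hΦy,
          map_zero, sub_zero]
      refine Submodule.mem_sup_right ?_
      have hys : y = y.sum fun i r => r • P' (Finsupp.single i 1) := by
        conv_lhs => rw [← hyP, ← Finsupp.sum_single y]
        rw [map_finsuppSum]
        refine Finsupp.sum_congr ?_
        intro i _
        rw [← map_smul]
        congr 1
        rw [Finsupp.smul_single, smul_eq_mul, mul_one]
      rw [hys]
      refine Submodule.sum_mem _ ?_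
      intro i hi
      refine subset_span ⟨y i, ?_, P' (Finsupp.single i 1), hP'K _, rfl⟩
      have h5 := sub_augE_mem (y i)
      rwa [hcoef i, map_zero, sub_zero] at h5
    have hKbot : K = ⊥ := by
      have h6 := nak hG ⊥ (K.restrictScalars k) hKle
      rw [eq_bot_iff]
      intro x hx
      simpa using h6 hx
    have hinj : Function.Injective Φ := by
      rw [← LinearMap.ker_eq_bot (M := Module.Basis.ofVectorSpaceIndex k C →₀ MonoidAlgebra k G)]
      exact hKbot
    exact Module.Free.of_equiv (LinearEquiv.ofBijective Φ ⟨hinj, hsurj⟩)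
  tfae_finish
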